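/- Monotonicity of Rényi divergence for subprobability measures: let p, q : I → ℝ≥0 be a subprobability mass functions on a finite set I with ∑ p(i) > 0 and p absolutely continuous w.r.t. q. Then for 1 < α ≤ β, (1/(α−1)) · log(∑ p(i)^α q(i)^{1−α}) ≤ (1/(β−1)) · log(∑ p(i)^β q(i)^{1−β}). -/

import Mathlib

open Finset

/-- Rényi divergence of order `α` between mass functions on a finite set. -/
noncomputable def renyiD {I : Type*} [Fintype I] (α : ℝ) (p q : I → ℝ) : ℝ :=
  (1 / (α - 1)) * Real.log (∑ i, p i ^ α * q i ^ (1 - α))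

/-- For `γ > 1`, the `γ`-sum rewrites as `∑ p i * (p i / q i) ^ (γ - 1)`,
assuming `p ≪ q`. -/
lemma renyi_sum_eq {I : Type*} [Fintype I] (p q : I → ℝ)
    (hp0 : ∀ i, 0 ≤ p i) (hq0 : ∀ i, 0 ≤ q i) (hac : ∀ i, q i = 0 → p i = 0)
    (γ : ℝ) (hγ : 1 < γ) :
    ∑ i, p i ^ γ * q i ^ (1 - γ) = ∑ i, p i * (p i / q i) ^ (γ - 1) := by
  apply Finset.sum_congr rfl
  intro i _
  rcases eq_or_lt_of_le (hp0 i) with hp | hp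
  · rw [← hp, Real.zero_rpow (by linarith), zero_mul, zero_mul]
  · have hq : 0 < q i := lt_of_le_of_ne (hq0 i) (fun h => by
      have := hac i h.symm; linarith)
    rw [Real.div_rpow (hp0 i) (hq0 i)]
    rw [show (1 : ℝ) - γ = -(γ - 1) by ring, Real.rpow_neg (hq0 i)]
    rw [show γ = 1 + (γ - 1) by ring]
    rw [Real.rpow_add hp, Real.rpow_one]
    field_simp
    congr 1; ring

/-- Monotonicity of Rényi divergence in the order, for subprobability mass
functions with positive total mass and `p ≪ q`. -/
theorem renyi_monotone_order_subprob {I : Type*} [Fintype I] (p q : I → ℝ)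
    (hp0 : ∀ i, 0 ≤ p i) (hq0 : ∀ i, 0 ≤ q i)
    (hps : ∑ i, p i ≤ 1) (hqs : ∑ i, q i ≤ 1)
    (hppos : 0 < ∑ i, p i)
    (hac : ∀ i, q i = 0 → p i = 0)
    (α β : ℝ) (hα : 1 < α) (hαβ : α ≤ β) :
    (1 / (α - 1)) * Real.log (∑ i, p i ^ α * q i ^ (1 - α)) ≤
      (1 / (β - 1)) * Real.log (∑ i, p i ^ β * q i ^ (1 - β)) := by
  rcases eq_or_lt_of_le hαβ with rfl | hlt
  · exact le_refl _
  have hβ : 1 < β := lt_trans hα hlt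
  set S : ℝ := ∑ i, p i with hS
  set c : ℝ := (α - 1) / (β - 1) with hc
  have hβ1 : (0:ℝ) < β - 1 := by linarith
  have hα1 : (0:ℝ) < α - 1 := by linarith
  have hcpos : 0 < c := div_pos hα1 hβ1
  have hc1 : c ≤ 1 := by
    rw [div_le_one hβ1]; linarith
  set A : I → ℝ := fun i => (p i / q i) ^ (β - 1) with hA
  have hAnn : ∀ i, 0 ≤ A i := fun i =>
    Real.rpow_nonneg (div_nonneg (hp0 i) (hq0 i)) _
  -- sum identities
  have hsumβ : ∑ i, p i ^ β * q i ^ (1 - β) = ∑ i, p i * A i :=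
    renyi_sum_eq p q hp0 hq0 hac β hβ
  have hsumα : ∑ i, p i ^ α * q i ^ (1 - α) = ∑ i, p i * (A i) ^ c := by
    rw [renyi_sum_eq p q hp0 hq0 hac α hα]
    apply Finset.sum_congr rfl
    intro i _
    congr 1
    simp only [hA]
    rw [← Real.rpow_mul (div_nonneg (hp0 i) (hq0 i))]
    congr 1
    rw [hc]
    field_simp
  -- positivity of the sums
  obtain ⟨i₀, -, hi₀⟩ : ∃ i ∈ Finset.univ, 0 < p i := by
    by_contra h
    push_neg at h
    have : S ≤ 0 := Finset.sum_nonpos (fun i _ => h i (Finset.mem_univ i))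
    linarith
  have hq₀ : 0 < q i₀ := lt_of_le_of_ne (hq0 i₀) (fun h => by
    have := hac i₀ h.symm; linarith)
  have hApos : 0 < A i₀ := Real.rpow_pos_of_pos (div_pos hi₀ hq₀) _
  have hSbpos : 0 < ∑ i, p i * A i := by
    apply Finset.sum_pos' (fun i _ => mul_nonneg (hp0 i) (hAnn i))
    exact ⟨i₀, Finset.mem_univ i₀, mul_pos hi₀ hApos⟩
  have hSapos : 0 < ∑ i, p i * (A i) ^ c := by
    apply Finset.sum_pos' (fun i _ => mul_nonneg (hp0 i) (Real.rpow_nonneg (hAnn i) c))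
    exact ⟨i₀, Finset.mem_univ i₀, mul_pos hi₀ (Real.rpow_pos_of_pos hApos c)⟩
  -- Jensen's inequality
  have hSpos : 0 < S := hppos
  have jensen : ∑ i, (p i / S) * (A i) ^ c ≤ (∑ i, (p i / S) * A i) ^ c := by
    have h := Real.arith_mean_le_rpow_mean Finset.univ (fun i => p i / S)
      (fun i => (A i) ^ c)
      (fun i _ => div_nonneg (hp0 i) hSpos.le)
      (by rw [← Finset.sum_div]; field_simp; exact hS.symm)
      (fun i _ => Real.rpow_nonneg (hAnn i) _)
      (p := 1 / c) (by rw [le_div_iff₀ hcpos]; linarith)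
    have heq : ∀ i, ((A i) ^ c) ^ (1 / c) = A i := by
      intro i
      rw [← Real.rpow_mul (hAnn i)]
      field_simp
      exact Real.rpow_one _
    calc ∑ i, (p i / S) * (A i) ^ c
        ≤ (∑ i, (p i / S) * ((A i) ^ c) ^ (1/c)) ^ (1 / (1/c)) := h
      _ = (∑ i, (p i / S) * A i) ^ c := by
          rw [one_div_one_div]
          congr 1
          exact Finset.sum_congr rfl (fun i _ => by rw [heq i])
  -- derive the log inequality
  have key : Real.log (∑ i, p i * (A i) ^ c) ≤ c * Real.log (∑ i, p i * A i) := by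
    have h1 : ∑ i, p i * (A i) ^ c = S * ∑ i, (p i / S) * (A i) ^ c := by
      rw [Finset.mul_sum]
      exact Finset.sum_congr rfl (fun i _ => by field_simp)
    have h2 : ∑ i, (p i / S) * A i = (∑ i, p i * A i) / S := by
      rw [Finset.sum_div]
      exact Finset.sum_congr rfl (fun i _ => by field_simp)
    have hle : ∑ i, p i * (A i) ^ c ≤ S * ((∑ i, p i * A i) / S) ^ c := by
      rw [h1]
      exact mul_le_mul_of_nonneg_left (h2 ▸ jensen) hSpos.le
    have hrhspos : 0 < S * ((∑ i, p i * A i) / S) ^ c :=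
      mul_pos hSpos (Real.rpow_pos_of_pos (div_pos hSbpos hSpos) _)
    calc Real.log (∑ i, p i * (A i) ^ c)
        ≤ Real.log (S * ((∑ i, p i * A i) / S) ^ c) :=
          Real.log_le_log hSapos hle
      _ = Real.log S + c * (Real.log (∑ i, p i * A i) - Real.log S) := by
          rw [Real.log_mul hSpos.ne' (Real.rpow_pos_of_pos (div_pos hSbpos hSpos) c).ne',
            Real.log_rpow (div_pos hSbpos hSpos), Real.log_div hSbpos.ne' hSpos.ne']
      _ = (1 - c) * Real.log S + c * Real.log (∑ i, p i * A i) := by ring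
      _ ≤ c * Real.log (∑ i, p i * A i) := by
          have hlogS : Real.log S ≤ 0 := Real.log_nonpos hSpos.le hps
          nlinarith
  rw [hsumα, hsumβ]
  have : (1 / (α - 1)) * (c * Real.log (∑ i, p i * A i)) =
      (1 / (β - 1)) * Real.log (∑ i, p i * A i) := by
    rw [hc]; field_simp
  calc (1 / (α - 1)) * Real.log (∑ i, p i * (A i) ^ c)
      ≤ (1 / (α - 1)) * (c * Real.log (∑ i, p i * A i)) :=
        mul_le_mul_of_nonneg_left key (by positivity)
    _ = (1 / (β - 1)) * Real.log (∑ i, p i * A i) := this
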